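/- Let n ≥ 1 and let a_1, ..., a_n, b_0, ..., b_n, v be real numbers with b_i ≥ v for all 0 ≤ i ≤ n, b_i ≤ v + H for all i (for some H ≥ 0), a_i ≥ 1 for all i, and a_{i+1} - a_i ≤ η·a_i + 1 for all 1 ≤ i ≤ n-1 (for some η > 0). Then Σ_{i=1}^n a_i·(b_{i-1} - b_i) ≤ a_1·(b_0 - v) + η·Σ_{i=1}^{n-1} a_i·(b_i - v) + n·H. -/

import Mathlib

lemma weighted_telescoping_aux (N : ℕ) (a b : ℕ → ℝ) (v H η : ℝ)
    (hH : 0 ≤ H) (hη : 0 < η)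
    (hbv : ∀ i ≤ N, v ≤ b i)
    (hbH : ∀ i ≤ N, b i ≤ v + H)
    (ha1 : ∀ i, 1 ≤ i → i ≤ N → 1 ≤ a i)
    (hstep : ∀ i, 1 ≤ i → i ≤ N - 1 → a (i + 1) - a i ≤ η * a i + 1) :
    ∀ n, 1 ≤ n → n ≤ N →
      ∑ i ∈ Finset.Icc 1 n, a i * (b (i - 1) - b i) + a n * (b n - v) ≤
        a 1 * (b 0 - v) + η * ∑ i ∈ Finset.Icc 1 (n - 1), a i * (b i - v)
          + ((n : ℝ) - 1) * H := by
  intro n hn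
  induction n, hn using Nat.le_induction with
  | base =>
    intro _
    simp
    ring_nf
    nlinarith []
  | succ n hn ih =>
    intro hle
    have hnN : n ≤ N := le_trans (Nat.le_succ n) hle
    have ihn := ih hnN
    have hIcc1 : Finset.Icc 1 (n + 1) = insert (n + 1) (Finset.Icc 1 n) := by
      ext x; simp [Finset.mem_Icc]; omega
    have hIcc2 : Finset.Icc 1 (n + 1 - 1) = insert n (Finset.Icc 1 (n - 1)) := by
      simp only [Nat.add_sub_cancel]
      have : Finset.Icc 1 n = insert n (Finset.Icc 1 (n - 1)) := by
        cases n with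
        | zero => omega
        | succ m =>
          ext x; simp [Finset.mem_Icc]; omega
      exact this
    have hnotmem1 : n + 1 ∉ Finset.Icc 1 n := by simp
    have hnotmem2 : n ∉ Finset.Icc 1 (n - 1) := by
      simp only [Finset.mem_Icc]; omega
    rw [hIcc1, Finset.sum_insert hnotmem1, hIcc2, Finset.sum_insert hnotmem2]
    have hstepn : a (n + 1) - a n ≤ η * a n + 1 := hstep n hn (by omega)
    have hbvn : v ≤ b n := hbv n hnN
    have hbHn : b n ≤ v + H := hbH n hnN
    have key : (a (n + 1) - a n) * (b n - v) ≤ η * (a n * (b n - v)) + H := by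
      have h1 : (a (n + 1) - a n) * (b n - v) ≤ (η * a n + 1) * (b n - v) := by
        apply mul_le_mul_of_nonneg_right hstepn
        linarith
      nlinarith [h1]
    have hrw : a (n + 1) * (b (n + 1 - 1) - b (n + 1)) + a (n + 1) * (b (n + 1) - v) =
        a (n + 1) * (b n - v) := by
      simp only [Nat.add_sub_cancel]; ring
    push_cast
    nlinarith [ihn, key]

theorem weighted_telescoping_bound (n : ℕ) (hn : 1 ≤ n) (a b : ℕ → ℝ) (v H η : ℝ)
    (hH : 0 ≤ H) (hη : 0 < η)
    (hbv : ∀ i ≤ n, v ≤ b i)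
    (hbH : ∀ i ≤ n, b i ≤ v + H)
    (ha1 : ∀ i, 1 ≤ i → i ≤ n → 1 ≤ a i)
    (hstep : ∀ i, 1 ≤ i → i ≤ n - 1 → a (i + 1) - a i ≤ η * a i + 1) :
    ∑ i ∈ Finset.Icc 1 n, a i * (b (i - 1) - b i) ≤
      a 1 * (b 0 - v) + η * ∑ i ∈ Finset.Icc 1 (n - 1), a i * (b i - v) + n * H := by
  have haux := weighted_telescoping_aux n a b v H η hH hη hbv hbH ha1 hstep n hn le_rfl
  have h1 : 0 ≤ a n * (b n - v) := by
    have := hbv n le_rfl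
    have := ha1 n hn le_rfl
    nlinarith
  have h2 : ((n : ℝ) - 1) * H ≤ n * H := by nlinarith
  linarith
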